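/- Suppose for each 1 ≤ j ≤ p we have a family of n vectors in C^{d_j} (indexed by a common set of size n), with the properties: (a) the corresponding n product states are mutually orthogonal; (b) for each j < p, any d_j distinct vectors of the j-th family span C^{d_j}; (c) any d_p + 1 distinct vectors of the p-th family span C^{d_p}; and (d) n ≥ (d_1 - 1) + ... + (d_{p-1} - 1) + d_p + 1. Then the n product states form an unextendible product basis. -/

import Mathlib

open scoped Classical

/-- The product (tensor) vector in `ℂ^{d₁} ⊗ ⋯ ⊗ ℂ^{d_p}`, realized as
`EuclideanSpace ℂ (Π j, Fin (d j))`, built from local vectors `f j`. -/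
noncomputable def prodVec {p : ℕ} {d : Fin p → ℕ}
    (f : ∀ j, EuclideanSpace ℂ (Fin (d j))) :
    EuclideanSpace ℂ (∀ j, Fin (d j)) :=
  WithLp.toLp 2 (fun x => ∏ j, f j (x j))

/-- A product state: a nonzero vector of the form `v₁ ⊗ ⋯ ⊗ v_p`. -/
def IsProductState {p : ℕ} {d : Fin p → ℕ}
    (v : EuclideanSpace ℂ (∀ j, Fin (d j))) : Prop :=
  v ≠ 0 ∧ ∃ f : ∀ j, EuclideanSpace ℂ (Fin (d j)), v = prodVec f

/-- An unextendible product basis: a finite set of mutually orthogonal product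
states such that every product state orthogonal to all of them is zero
(equivalently, no product state is orthogonal to all of them). -/
def IsUPB {p : ℕ} {d : Fin p → ℕ}
    (S : Finset (EuclideanSpace ℂ (∀ j, Fin (d j)))) : Prop :=
  (∀ v ∈ S, IsProductState v) ∧
  (∀ v ∈ S, ∀ w ∈ S, v ≠ w → (inner ℂ v w : ℂ) = 0) ∧
  ∀ z : EuclideanSpace ℂ (∀ j, Fin (d j)),
    IsProductState z → ¬ (∀ v ∈ S, (inner ℂ v z : ℂ) = 0)

lemma prodVec_eq_zero_of {p : ℕ} {d : Fin p → ℕ}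
    (f : ∀ j, EuclideanSpace ℂ (Fin (d j))) (j : Fin p) (h : f j = 0) :
    prodVec f = 0 := by
  ext x
  have hx : f j (x j) = 0 := by rw [h]; rfl
  simpa [prodVec] using Finset.prod_eq_zero (Finset.mem_univ j) hx

lemma inner_prodVec {p : ℕ} {d : Fin p → ℕ}
    (f g : ∀ j, EuclideanSpace ℂ (Fin (d j))) :
    (inner ℂ (prodVec f) (prodVec g) : ℂ) = ∏ j, (inner ℂ (f j) (g j) : ℂ) := by
  simp only [PiLp.inner_apply, RCLike.inner_apply, prodVec, map_prod]
  rw [Finset.prod_univ_sum, Fintype.piFinset_univ]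
  exact Finset.sum_congr rfl fun x _ => (Finset.prod_mul_distrib).symm

theorem stmt3 {p n : ℕ} (d : Fin (p + 1) → ℕ) (hd : ∀ j, 1 ≤ d j)
    (vec : ∀ j : Fin (p + 1), Fin n → EuclideanSpace ℂ (Fin (d j)))
    (hnz : ∀ i : Fin n, prodVec (fun j => vec j i) ≠ 0)
    (horth : ∀ i k : Fin n, i ≠ k →
      (inner ℂ (prodVec fun j => vec j i) (prodVec fun j => vec j k) : ℂ) = 0)
    (hspan1 : ∀ j : Fin p, ∀ T : Finset (Fin n), T.card = d j.castSucc →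
      Submodule.span ℂ (vec j.castSucc '' ↑T) = ⊤)
    (hspan2 : ∀ T : Finset (Fin n), T.card = d (Fin.last p) + 1 →
      Submodule.span ℂ (vec (Fin.last p) '' ↑T) = ⊤)
    (hn : (∑ j : Fin p, (d j.castSucc - 1)) + d (Fin.last p) + 1 ≤ n) :
    IsUPB (Finset.univ.image fun i => prodVec fun j => vec j i) := by
  refine ⟨?_, ?_, ?_⟩
  · intro v hv
    simp only [Finset.mem_image, Finset.mem_univ, true_and] at hv
    obtain ⟨i, rfl⟩ := hv
    exact ⟨hnz i, _, rfl⟩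
  · intro v hv w hw hvw
    simp only [Finset.mem_image, Finset.mem_univ, true_and] at hv hw
    obtain ⟨i, rfl⟩ := hv
    obtain ⟨k, rfl⟩ := hw
    exact horth i k (fun h => hvw (by rw [h]))
  · rintro z ⟨hz0, g, rfl⟩ hall
    have hg : ∀ j, g j ≠ 0 := fun j hj => hz0 (prodVec_eq_zero_of g j hj)
    have hall' : ∀ i : Fin n, ∃ j, (inner ℂ (vec j i) (g j) : ℂ) = 0 := by
      intro i
      have h0 := hall _ (Finset.mem_image_of_mem _ (Finset.mem_univ i))
      rw [inner_prodVec] at h0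
      obtain ⟨j, _, hj⟩ := Finset.prod_eq_zero_iff.mp h0
      exact ⟨j, hj⟩
    set S : Fin (p + 1) → Finset (Fin n) :=
      fun j => Finset.univ.filter (fun i => (inner ℂ (vec j i) (g j) : ℂ) = 0) with hS
    have key : ∀ j (T : Finset (Fin n)), T ⊆ S j →
        Submodule.span ℂ (vec j '' ↑T) = ⊤ → False := by
      intro j T hT hsp
      apply hg j
      have hsub : (vec j '' ↑T : Set _) ⊆ (ℂ ∙ g j)ᗮ := by
        rintro _ ⟨i, hi, rfl⟩
        rw [SetLike.mem_coe, Submodule.mem_orthogonal_singleton_iff_inner_left]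
        exact (Finset.mem_filter.mp (hT hi)).2
      have : (⊤ : Submodule ℂ _) ≤ (ℂ ∙ g j)ᗮ := hsp ▸ Submodule.span_le.mpr hsub
      have hgj : g j ∈ (ℂ ∙ g j)ᗮ := this Submodule.mem_top
      rw [Submodule.mem_orthogonal_singleton_iff_inner_right] at hgj
      exact inner_self_eq_zero.mp hgj
    have hcard1 : ∀ j : Fin p, (S j.castSucc).card ≤ d j.castSucc - 1 := by
      intro j
      by_contra h
      push_neg at h
      have h' : d j.castSucc ≤ (S j.castSucc).card := by
        have := hd j.castSucc; omega
      obtain ⟨T, hT, hTc⟩ := Finset.exists_subset_card_eq h'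
      exact key _ T hT (hspan1 j T hTc)
    have hcard2 : (S (Fin.last p)).card ≤ d (Fin.last p) := by
      by_contra h
      push_neg at h
      obtain ⟨T, hT, hTc⟩ := Finset.exists_subset_card_eq
        (show d (Fin.last p) + 1 ≤ (S (Fin.last p)).card by omega)
      exact key _ T hT (hspan2 T hTc)
    have hcover : (Finset.univ : Finset (Fin n)) ⊆ Finset.univ.biUnion S := by
      intro i _
      obtain ⟨j, hj⟩ := hall' i
      exact Finset.mem_biUnion.mpr
        ⟨j, Finset.mem_univ j, Finset.mem_filter.mpr ⟨Finset.mem_univ i, hj⟩⟩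
    have h1 : n ≤ ∑ j, (S j).card := by
      calc n = (Finset.univ : Finset (Fin n)).card := (Finset.card_fin n).symm
        _ ≤ (Finset.univ.biUnion S).card := Finset.card_le_card hcover
        _ ≤ ∑ j, (S j).card := Finset.card_biUnion_le
    have h2 : ∑ j, (S j).card ≤ (∑ j : Fin p, (d j.castSucc - 1)) + d (Fin.last p) := by
      rw [Fin.sum_univ_castSucc]
      exact add_le_add (Finset.sum_le_sum fun j _ => hcard1 j) hcard2
    omega
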